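/- Let n ≥ 5. An n×n normal matrix A over R = {0, −1} is self-orthogonal (A⊙A = Z_n) with the minimal number of off-diagonal zeros among all self-orthogonal n×n normal matrices if and only if there exists k ∈ [n] such that A is V(k;k)-generic, i.e., A_{ij} = 0 exactly when (i = j or i = k or j = k). Moreover, this minimal number of off-diagonal zeros equals Θ_n^Δ = 2n − 2; that is, the minimum of ν(A) − n over all self-orthogonal n×n normal matrices equals 2n − 2. -/

import Mathlib

/-- A matrix over `R = {0,-1} ⊆ ℤ` is normal: zero diagonal, entries `0` or `-1`. -/
def IsNormal {n : ℕ} (A : Matrix (Fin n) (Fin n) ℤ) : Prop :=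
  (∀ i, A i i = 0) ∧ ∀ i j, A i j = 0 ∨ A i j = -1

/-- Tropical (max-plus) matrix product: `(A⊙B) i j = max_k (A i k + B k j)`. -/
noncomputable def tropMul {n : ℕ} (A B : Matrix (Fin n) (Fin n) ℤ) :
    Matrix (Fin n) (Fin n) ℤ :=
  Matrix.of fun i j => sSup (Set.range fun k => A i k + B k j)

/-- Tropical sum: entrywise maximum. -/
def tropSum {n : ℕ} (A B : Matrix (Fin n) (Fin n) ℤ) : Matrix (Fin n) (Fin n) ℤ :=
  Matrix.of fun i j => max (A i j) (B i j)

/-- `nu A` is the number of zero entries of `A`. -/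
def nu {n : ℕ} (A : Matrix (Fin n) (Fin n) ℤ) : ℕ :=
  (Finset.univ.filter (fun p : Fin n × Fin n => A p.1 p.2 = 0)).card

namespace StmtAux

variable {n : ℕ}

/-- "Self-orthogonality" rephrased combinatorially. -/
def SO (A : Matrix (Fin n) (Fin n) ℤ) : Prop := ∀ i j, ∃ k, A i k = 0 ∧ A k j = 0

/-- Out-degree: number of off-diagonal zeros in row `i`. -/
def deg (A : Matrix (Fin n) (Fin n) ℤ) (i : Fin n) : ℕ :=
  (Finset.univ.filter fun j => j ≠ i ∧ A i j = 0).card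

lemma tropMul_self_eq_zero_iff (hn : 0 < n) {A : Matrix (Fin n) (Fin n) ℤ}
    (hA : IsNormal A) : tropMul A A = 0 ↔ SO A := by
  haveI : Nonempty (Fin n) := ⟨⟨0, hn⟩⟩
  constructor
  · intro h i j
    have h0 : sSup (Set.range fun k => A i k + A k j) = 0 := by
      have := congrFun (congrFun h i) j
      simpa [tropMul] using this
    have hfin : (Set.range fun k => A i k + A k j).Finite := Set.finite_range _
    have hne : (Set.range fun k => A i k + A k j).Nonempty := Set.range_nonempty _
    have hmem := hne.csSup_mem hfin
    rw [h0] at hmem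
    obtain ⟨k, hk⟩ := hmem
    simp only at hk
    refine ⟨k, ?_, ?_⟩ <;>
      · rcases hA.2 i k with h1 | h1 <;> rcases hA.2 k j with h2 | h2 <;> omega
  · intro h
    ext i j
    show sSup (Set.range fun k => A i k + A k j) = 0
    obtain ⟨k, hk1, hk2⟩ := h i j
    apply IsGreatest.csSup_eq
    constructor
    · exact ⟨k, by simp [hk1, hk2]⟩
    · rintro x ⟨m, rfl⟩
      rcases hA.2 i m with h1 | h1 <;> rcases hA.2 m j with h2 | h2 <;> simp [h1, h2]

lemma nu_eq {A : Matrix (Fin n) (Fin n) ℤ} (hA : IsNormal A) :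
    nu A = n + ∑ i, deg A i := by
  have h1 : nu A = ∑ i : Fin n, (Finset.univ.filter fun j => A i j = 0).card := by
    rw [nu, Finset.card_eq_sum_card_fiberwise (f := Prod.fst) (t := Finset.univ)
      (fun x _ => Finset.mem_univ _)]
    refine Finset.sum_congr rfl fun i _ => ?_
    refine Finset.card_bij' (fun p _ => p.2) (fun j _ => (i, j)) ?_ ?_ ?_ ?_
    · intro p hp
      simp only [Finset.mem_filter, Finset.mem_univ, true_and] at hp ⊢
      rw [← hp.2]; exact hp.1
    · intro j hj
      simp only [Finset.mem_filter, Finset.mem_univ, true_and] at hj ⊢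
      exact ⟨hj, trivial⟩
    · rintro ⟨a, b⟩ hp
      simp only [Finset.mem_filter] at hp
      simp only at hp ⊢
      simp [hp.2]
    · intro j hj; rfl
  have h2 : ∀ i : Fin n, (Finset.univ.filter fun j => A i j = 0).card = 1 + deg A i := by
    intro i
    have he : (Finset.univ.filter fun j => A i j = 0)
        = insert i (Finset.univ.filter fun j => j ≠ i ∧ A i j = 0) := by
      ext j
      simp only [Finset.mem_filter, Finset.mem_univ, true_and, Finset.mem_insert]
      constructor
      · intro hj
        by_cases h : j = i
        · exact Or.inl h
        · exact Or.inr ⟨h, hj⟩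
      · rintro (rfl | ⟨_, hj⟩)
        · exact hA.1 j
        · exact hj
    rw [he, Finset.card_insert_of_notMem (by simp), deg, Nat.add_comm]
  rw [h1]
  simp_rw [h2]
  rw [Finset.sum_add_distrib]
  simp [Finset.card_univ]

lemma deg_pos (hn : 2 ≤ n) {A : Matrix (Fin n) (Fin n) ℤ}
    (hSO : SO A) (i : Fin n) : 1 ≤ deg A i := by
  haveI : Nontrivial (Fin n) := Fin.nontrivial_iff_two_le.mpr hn
  obtain ⟨j, hj⟩ := exists_ne i
  obtain ⟨k, hk1, hk2⟩ := hSO i j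
  rw [deg, Nat.one_le_iff_ne_zero, Ne, Finset.card_eq_zero, ← Ne,
    ← Finset.nonempty_iff_ne_empty]
  by_cases hki : k = i
  · subst hki
    exact ⟨j, by simp [hj, hk2]⟩
  · exact ⟨k, by simp [hki, hk1]⟩

lemma target_unique {A : Matrix (Fin n) (Fin n) ℤ} {v : Fin n} (h : deg A v = 1) :
    ∃ u, u ≠ v ∧ A v u = 0 ∧ ∀ w, w ≠ v → A v w = 0 → w = u := by
  rw [deg, Finset.card_eq_one] at h
  obtain ⟨u, hu⟩ := h
  have hmem : u ∈ ({u} : Finset (Fin n)) := Finset.mem_singleton_self u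
  rw [← hu, Finset.mem_filter] at hmem
  refine ⟨u, hmem.2.1, hmem.2.2, fun w hw1 hw2 => ?_⟩
  have : w ∈ Finset.univ.filter fun j => j ≠ v ∧ A v j = 0 := by simp [hw1, hw2]
  rwa [hu, Finset.mem_singleton] at this

lemma hub {A : Matrix (Fin n) (Fin n) ℤ} (hSO : SO A)
    {v u : Fin n} (huniq : ∀ w, w ≠ v → A v w = 0 → w = u) :
    ∀ w, w ≠ u → w ≠ v → A u w = 0 := by
  intro w hwu hwv
  obtain ⟨k, hk1, hk2⟩ := hSO v w
  by_cases hkv : k = v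
  · subst hkv
    exact absurd (huniq w hwv hk2) hwu
  · have hk := huniq k hkv hk1
    subst hk
    exact hk2

lemma deg_ge_of_hub {A : Matrix (Fin n) (Fin n) ℤ} {u v : Fin n} (huv : v ≠ u)
    (h : ∀ w, w ≠ u → w ≠ v → A u w = 0) : n - 2 ≤ deg A u := by
  have hsub : (Finset.univ.erase u).erase v
      ⊆ Finset.univ.filter fun j => j ≠ u ∧ A u j = 0 := by
    intro w hw
    simp only [Finset.mem_erase, Finset.mem_univ, and_true] at hw
    simp only [Finset.mem_filter, Finset.mem_univ, true_and]
    exact ⟨hw.2, h w hw.2 hw.1⟩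
  have hc := Finset.card_le_card hsub
  have hv : v ∈ Finset.univ.erase u := Finset.mem_erase.mpr ⟨huv, Finset.mem_univ v⟩
  have h2 : ((Finset.univ.erase u).erase v).card = n - 2 := by
    rw [Finset.card_erase_of_mem hv, Finset.card_erase_of_mem (Finset.mem_univ u),
      Finset.card_univ, Fintype.card_fin]; omega
  rw [deg]
  omega

lemma deg_ge_full {A : Matrix (Fin n) (Fin n) ℤ} {u : Fin n}
    (h : ∀ w, w ≠ u → A u w = 0) : n - 1 ≤ deg A u := by
  have hsub : Finset.univ.erase u ⊆ Finset.univ.filter fun j => j ≠ u ∧ A u j = 0 := by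
    intro w hw
    simp only [Finset.mem_erase, Finset.mem_univ, and_true] at hw
    simp only [Finset.mem_filter, Finset.mem_univ, true_and]
    exact ⟨hw, h w hw⟩
  have hc := Finset.card_le_card hsub
  have h2 : (Finset.univ.erase u).card = n - 1 := by
    rw [Finset.card_erase_of_mem (Finset.mem_univ u), Finset.card_univ, Fintype.card_fin]
  rw [deg]
  omega

lemma sum_ge_three {d : Fin n → ℕ} (hd : ∀ i, 1 ≤ d i) {a b : Fin n} (hab : a ≠ b) :
    d a + d b + (n - 2) ≤ ∑ i, d i := by
  have hb : b ∈ Finset.univ.erase a := Finset.mem_erase.mpr ⟨hab.symm, Finset.mem_univ b⟩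
  have h1 : ((Finset.univ.erase a).erase b).card
      ≤ ∑ i ∈ (Finset.univ.erase a).erase b, d i := by
    calc ((Finset.univ.erase a).erase b).card
        = ∑ _i ∈ (Finset.univ.erase a).erase b, 1 := by simp
    _ ≤ _ := Finset.sum_le_sum fun i _ => hd i
  have h2 : ((Finset.univ.erase a).erase b).card = n - 2 := by
    rw [Finset.card_erase_of_mem hb, Finset.card_erase_of_mem (Finset.mem_univ a),
      Finset.card_univ, Fintype.card_fin]; omega
  have h3 : d b + ∑ i ∈ (Finset.univ.erase a).erase b, d i
      = ∑ i ∈ Finset.univ.erase a, d i := Finset.add_sum_erase _ _ hb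
  have h4 : d a + ∑ i ∈ Finset.univ.erase a, d i = ∑ i, d i :=
    Finset.add_sum_erase _ _ (Finset.mem_univ a)
  omega

/-- Any self-orthogonal normal matrix with at most `2n-2` off-diagonal zeros is a star. -/
lemma star_of_min (hn : 5 ≤ n) {A : Matrix (Fin n) (Fin n) ℤ}
    (hdiag : ∀ i, A i i = 0)
    (hSO : SO A) (hS : ∑ i, deg A i ≤ 2 * n - 2) :
    ∃ k, ∀ i j, A i j = 0 ↔ i = j ∨ i = k ∨ j = k := by
  have hd1 : ∀ i, 1 ≤ deg A i := deg_pos (by omega) hSO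
  -- at least two vertices of out-degree 1
  have hTcard : 1 < (Finset.univ.filter fun i : Fin n => deg A i = 1).card := by
    set T := Finset.univ.filter fun i : Fin n => deg A i = 1 with hTdef
    set T' := Finset.univ.filter fun i : Fin n => ¬ deg A i = 1 with hT'def
    have hsplit : ∑ i ∈ T, deg A i + ∑ i ∈ T', deg A i = ∑ i, deg A i :=
      Finset.sum_filter_add_sum_filter_not _ _ _
    have hT1 : ∑ i ∈ T, deg A i = T.card := by
      rw [Finset.sum_congr rfl fun i hi => (Finset.mem_filter.mp hi).2]
      simp [hTdef]
    have hT2 : T'.card * 2 ≤ ∑ i ∈ T', deg A i := by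
      have := Finset.card_nsmul_le_sum T' (deg A) 2
        (fun i hi => by have h1 := hd1 i; have h2 := (Finset.mem_filter.mp hi).2; omega)
      simpa [smul_eq_mul] using this
    have hcards : T.card + T'.card = n := by
      rw [Finset.card_filter_add_card_filter_not, Finset.card_univ, Fintype.card_fin]
    omega
  obtain ⟨v₁, hv₁, v₂, hv₂, hv12⟩ := Finset.one_lt_card.mp hTcard
  have hdv₁ : deg A v₁ = 1 := (Finset.mem_filter.mp hv₁).2
  have hdv₂ : deg A v₂ = 1 := (Finset.mem_filter.mp hv₂).2
  obtain ⟨u₁, hu₁v, hu₁0, hu₁uniq⟩ := target_unique hdv₁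
  obtain ⟨u₂, hu₂v, hu₂0, hu₂uniq⟩ := target_unique hdv₂
  have hhub₁ := hub hSO hu₁uniq
  have hhub₂ := hub hSO hu₂uniq
  have hdu₁ : n - 2 ≤ deg A u₁ := deg_ge_of_hub (Ne.symm hu₁v) hhub₁
  have hdu₂ : n - 2 ≤ deg A u₂ := deg_ge_of_hub (Ne.symm hu₂v) hhub₂
  have huu : u₂ = u₁ := by
    by_contra hne
    have := sum_ge_three hd1 (a := u₁) (b := u₂) (fun h => hne h.symm)
    omega
  subst huu
  -- u₂ is a universal out-hub
  have hall : ∀ w, w ≠ u₂ → A u₂ w = 0 := by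
    intro w hw
    by_cases hwv : w = v₁
    · subst hwv
      exact hhub₂ w hw hv12
    · exact hhub₁ w hw hwv
  have hdu : n - 1 ≤ deg A u₂ := deg_ge_full hall
  -- all other vertices have out-degree 1
  have hothers : ∀ v, v ≠ u₂ → deg A v = 1 := by
    intro v hv
    by_contra hne
    have h2 : 2 ≤ deg A v := by have := hd1 v; omega
    have := sum_ge_three hd1 (a := u₂) (b := v) (fun h => hv h.symm)
    omega
  -- all other vertices point exactly to u₂
  have htarget : ∀ v, v ≠ u₂ → A v u₂ = 0 ∧ ∀ w, w ≠ v → A v w = 0 → w = u₂ := by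
    intro v hv
    obtain ⟨w, hwv, hw0, hwuniq⟩ := target_unique (hothers v hv)
    have hwu : w = u₂ := by
      by_contra hwu
      have h1 := deg_ge_of_hub (Ne.symm hwv) (hub hSO hwuniq)
      have h2 := hothers w hwu
      omega
    subst hwu
    exact ⟨hw0, hwuniq⟩
  refine ⟨u₂, fun i j => ?_⟩
  constructor
  · intro hij
    by_cases h1 : i = j
    · exact Or.inl h1
    by_cases h2 : i = u₂
    · exact Or.inr (Or.inl h2)
    · exact Or.inr (Or.inr ((htarget i h2).2 j (fun h => h1 h.symm) hij))
  · rintro (rfl | rfl | rfl)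
    · exact hdiag i
    · by_cases hj : j = i
      · subst hj; exact hdiag j
      · exact hall j hj
    · by_cases hi : i = j
      · subst hi; exact hdiag i
      · exact (htarget i hi).1

lemma star_SO {A : Matrix (Fin n) (Fin n) ℤ} {k : Fin n}
    (hstar : ∀ i j, A i j = 0 ↔ i = j ∨ i = k ∨ j = k) : SO A :=
  fun i j => ⟨k, (hstar i k).mpr (Or.inr (Or.inr rfl)), (hstar k j).mpr (Or.inr (Or.inl rfl))⟩

lemma star_sum {A : Matrix (Fin n) (Fin n) ℤ} {k : Fin n}
    (hstar : ∀ i j, A i j = 0 ↔ i = j ∨ i = k ∨ j = k) :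
    ∑ i, deg A i = 2 * n - 2 := by
  have hk : deg A k = n - 1 := by
    rw [deg]
    have he : (Finset.univ.filter fun j => j ≠ k ∧ A k j = 0) = Finset.univ.erase k := by
      ext j
      simp only [Finset.mem_filter, Finset.mem_univ, true_and, Finset.mem_erase, and_true,
        hstar k j]
      tauto
    rw [he, Finset.card_erase_of_mem (Finset.mem_univ k), Finset.card_univ, Fintype.card_fin]
  have hv : ∀ v, v ≠ k → deg A v = 1 := by
    intro v hvk
    rw [deg]
    have he : (Finset.univ.filter fun j => j ≠ v ∧ A v j = 0) = {k} := by
      ext j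
      simp only [Finset.mem_filter, Finset.mem_univ, true_and, Finset.mem_singleton,
        hstar v j]
      constructor
      · rintro ⟨hjv, (h | h | h)⟩
        · exact absurd h.symm hjv
        · exact absurd h hvk
        · exact h
      · rintro rfl
        exact ⟨fun h => hvk h.symm, Or.inr (Or.inr rfl)⟩
    rw [he, Finset.card_singleton]
  have hsum : ∑ i ∈ Finset.univ.erase k, deg A i = (Finset.univ.erase k).card := by
    rw [Finset.sum_congr rfl fun i hi => hv i (Finset.mem_erase.mp hi).1]
    simp
  have h3 : deg A k + ∑ i ∈ Finset.univ.erase k, deg A i = ∑ i, deg A i :=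
    Finset.add_sum_erase _ _ (Finset.mem_univ k)
  have h4 : (Finset.univ.erase k).card = n - 1 := by
    rw [Finset.card_erase_of_mem (Finset.mem_univ k), Finset.card_univ, Fintype.card_fin]
  have hn1 : 1 ≤ n := Nat.one_le_iff_ne_zero.mpr (by rintro rfl; exact absurd k.2 (by omega))
  omega

/-- The explicit star matrix. -/
def starMat (n : ℕ) (k : Fin n) : Matrix (Fin n) (Fin n) ℤ :=
  Matrix.of fun i j => if i = j ∨ i = k ∨ j = k then 0 else -1

lemma starMat_star (k : Fin n) :
    ∀ i j, starMat n k i j = 0 ↔ i = j ∨ i = k ∨ j = k := by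
  intro i j
  by_cases h : i = j ∨ i = k ∨ j = k
  · simp [starMat, h]
  · simp [starMat, h]

lemma starMat_normal (k : Fin n) : IsNormal (starMat n k) := by
  constructor
  · intro i; simp [starMat]
  · intro i j
    by_cases h : i = j ∨ i = k ∨ j = k
    · simp [starMat, h]
    · simp [starMat, h]

/-- The lower bound on the number of off-diagonal zeros. -/
lemma sum_lower (hn : 5 ≤ n) {A : Matrix (Fin n) (Fin n) ℤ} (hA : IsNormal A)
    (hSO : SO A) : 2 * n - 2 ≤ ∑ i, deg A i := by
  by_contra h
  push_neg at h
  obtain ⟨k, hstar⟩ := star_of_min hn hA.1 hSO (le_of_lt h)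
  have := star_sum hstar
  omega

end StmtAux

theorem stmt_13 (n : ℕ) (hn : 5 ≤ n) :
    (∀ A : Matrix (Fin n) (Fin n) ℤ, IsNormal A →
      ((tropMul A A = 0 ∧
          ∀ A' : Matrix (Fin n) (Fin n) ℤ, IsNormal A' → tropMul A' A' = 0 →
            nu A ≤ nu A') ↔
        ∃ k : Fin n, ∀ i j, A i j = 0 ↔ (i = j ∨ i = k ∨ j = k))) ∧
    (∃ A : Matrix (Fin n) (Fin n) ℤ, IsNormal A ∧ tropMul A A = 0 ∧
      nu A = 2 * n - 2 + n) ∧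
    (∀ A : Matrix (Fin n) (Fin n) ℤ, IsNormal A → tropMul A A = 0 →
      2 * n - 2 + n ≤ nu A) := by
  have hn0 : 0 < n := by omega
  set k0 : Fin n := ⟨0, hn0⟩
  have hBnormal : IsNormal (StmtAux.starMat n k0) := StmtAux.starMat_normal k0
  have hBSO : StmtAux.SO (StmtAux.starMat n k0) := StmtAux.star_SO (StmtAux.starMat_star k0)
  have hBmul : tropMul (StmtAux.starMat n k0) (StmtAux.starMat n k0) = 0 :=
    (StmtAux.tropMul_self_eq_zero_iff hn0 hBnormal).mpr hBSO
  have hBnu : nu (StmtAux.starMat n k0) = n + (2 * n - 2) := by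
    rw [StmtAux.nu_eq hBnormal, StmtAux.star_sum (StmtAux.starMat_star k0)]
  refine ⟨?_, ?_, ?_⟩
  · intro A hA
    constructor
    · rintro ⟨hmul, hmin⟩
      have hSO : StmtAux.SO A := (StmtAux.tropMul_self_eq_zero_iff hn0 hA).mp hmul
      have hle := hmin (StmtAux.starMat n k0) hBnormal hBmul
      have hnuA : nu A = n + ∑ i, StmtAux.deg A i := StmtAux.nu_eq hA
      exact StmtAux.star_of_min hn hA.1 hSO (by omega)
    · rintro ⟨k, hstar⟩
      have hSO : StmtAux.SO A := StmtAux.star_SO hstar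
      refine ⟨(StmtAux.tropMul_self_eq_zero_iff hn0 hA).mpr hSO, fun A' hA' hmul' => ?_⟩
      have hSO' : StmtAux.SO A' := (StmtAux.tropMul_self_eq_zero_iff hn0 hA').mp hmul'
      have h1 := StmtAux.sum_lower hn hA' hSO'
      rw [StmtAux.nu_eq hA, StmtAux.nu_eq hA', StmtAux.star_sum hstar]
      omega
  · exact ⟨StmtAux.starMat n k0, hBnormal, hBmul, by omega⟩
  · intro A hA hmul
    have hSO : StmtAux.SO A := (StmtAux.tropMul_self_eq_zero_iff hn0 hA).mp hmul
    have h1 := StmtAux.sum_lower hn hA hSO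
    rw [StmtAux.nu_eq hA]
    omega
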